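/- Let n = 3, let B_1, B_2, B_3 ∈ ℝ² be affinely independent, t_1, t_2, t_3 ∈ ℝ \ {0,1}, A_i := t_i·B_{i−1} + (1−t_i)·B_i (with B_0 = B_3), and suppose the lines through B_2, A_1 and through B_3, A_2 are not parallel. Then ∏_{i=1}^3 (1−t_i)/t_i = 1 if and only if the three lines through B_1 and A_3, through B_2 and A_1, and through B_3 and A_2 have a common point (Ceva configuration). -/

import Mathlib

open Matrix

/-- **Ceva configuration.**  For an affinely independent triangle `B₁B₂B₃` in the plane
and `Aᵢ = tᵢ B_{i-1} + (1 - tᵢ) Bᵢ` (indices mod 3), the product `∏ᵢ (1 - tᵢ)/tᵢ`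
equals `1` iff the lines `B₁A₃`, `B₂A₁` and `B₃A₂` are concurrent. -/
theorem stmt4 (B₁ B₂ B₃ : Fin 2 → ℝ) (t₁ t₂ t₃ : ℝ)
    (hB : AffineIndependent ℝ ![B₁, B₂, B₃])
    (ht₁0 : t₁ ≠ 0) (ht₁1 : t₁ ≠ 1) (ht₂0 : t₂ ≠ 0) (ht₂1 : t₂ ≠ 1)
    (ht₃0 : t₃ ≠ 0) (ht₃1 : t₃ ≠ 1)
    (A₁ A₂ A₃ : Fin 2 → ℝ)
    (hA₁ : A₁ = t₁ • B₃ + (1 - t₁) • B₁)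
    (hA₂ : A₂ = t₂ • B₁ + (1 - t₂) • B₂)
    (hA₃ : A₃ = t₃ • B₂ + (1 - t₃) • B₃)
    (hnp : ¬ AffineSubspace.Parallel
      (affineSpan ℝ ({B₂, A₁} : Set (Fin 2 → ℝ)))
      (affineSpan ℝ ({B₃, A₂} : Set (Fin 2 → ℝ)))) :
    ((1 - t₁) / t₁) * ((1 - t₂) / t₂) * ((1 - t₃) / t₃) = 1
    ↔ ∃ P : Fin 2 → ℝ,
        P ∈ affineSpan ℝ ({B₁, A₃} : Set (Fin 2 → ℝ)) ∧
        P ∈ affineSpan ℝ ({B₂, A₁} : Set (Fin 2 → ℝ)) ∧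
        P ∈ affineSpan ℝ ({B₃, A₂} : Set (Fin 2 → ℝ)) := by
  -- helper: membership in a line from a convex-combination expression
  have hmem : ∀ (p q P : Fin 2 → ℝ) (r : ℝ), P = (1-r) • p + r • q →
      P ∈ affineSpan ℝ ({p, q} : Set (Fin 2 → ℝ)) := by
    intro p q P r h
    have h2 : P = r • (q -ᵥ p) +ᵥ p := by
      rw [h]; simp only [vsub_eq_sub, vadd_eq_add]; module
    rw [h2]
    exact smul_vsub_vadd_mem_affineSpan_pair r p q
  have hmem' : ∀ (p q P : Fin 2 → ℝ),
      P ∈ affineSpan ℝ ({p, q} : Set (Fin 2 → ℝ)) →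
      ∃ r : ℝ, P = (1-r) • p + r • q := by
    intro p q P h
    have h2 : (P - p) +ᵥ p ∈ affineSpan ℝ ({p, q} : Set (Fin 2 → ℝ)) := by
      simpa using h
    obtain ⟨r, hr⟩ := vadd_left_mem_affineSpan_pair.mp h2
    refine ⟨r, ?_⟩
    have hr' : r • (q - p) = P - p := by simpa [vsub_eq_sub] using hr
    rw [sub_eq_iff_eq_add.mp hr'.symm]; module
  -- uniqueness of barycentric coordinates
  have key : ∀ a b c a' b' c' : ℝ, a + b + c = a' + b' + c' →
      a • B₁ + b • B₂ + c • B₃ = a' • B₁ + b' • B₂ + c' • B₃ →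
      a = a' ∧ b = b' ∧ c = c' := by
    intro a b c a' b' c' hs he
    have h := affineIndependent_iff.mp hB Finset.univ ![a - a', b - b', c - c']
      (by simp [Fin.sum_univ_three]; linarith)
      (by
        simp [Fin.sum_univ_three]
        linear_combination (norm := module) he)
    have h0 := h 0 (Finset.mem_univ _)
    have h1 := h 1 (Finset.mem_univ _)
    have h2 := h 2 (Finset.mem_univ _)
    simp at h0 h1 h2
    exact ⟨by linarith [sub_eq_zero.mp h0], by linarith [sub_eq_zero.mp h1],
      by linarith [sub_eq_zero.mp h2]⟩
  constructor
  · intro hprod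
    have hp : (1 - t₁) * (1 - t₂) * (1 - t₃) = t₁ * t₂ * t₃ := by
      field_simp at hprod; linarith
    by_cases hS : 1 - t₁ + t₁ * t₂ = 0
    · -- the two lines are parallel, contradicting hnp
      exfalso
      apply hnp
      rw [AffineSubspace.affineSpan_pair_parallel_iff_vectorSpan_eq, vectorSpan_pair,
        vectorSpan_pair]
      have hv : B₃ -ᵥ A₂ = (t₂ - 1) • (B₂ -ᵥ A₁) := by
        rw [hA₁, hA₂]
        simp only [vsub_eq_sub]
        match_scalars
        · linear_combination hS
        · linear_combination -hS
        · ring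
      rw [hv, Submodule.span_singleton_smul_eq
        (isUnit_iff_ne_zero.mpr (sub_ne_zero.mpr ht₂1))]
    · have hD0 : (1 - t₁ + t₁ * t₂) ≠ 0 := hS
      set D := 1 - t₁ + t₁ * t₂ with hD
      refine ⟨(t₂ * (1 - t₁) / D) • B₁ + ((1 - t₂) * (1 - t₁) / D) • B₂ +
        (t₁ * t₂ / D) • B₃, ?_, ?_, ?_⟩
      · apply hmem _ _ _ ((1 - t₂) * (1 - t₁) / (t₃ * D))
        rw [hA₃]
        match_scalars
        · field_simp; rw [hD]
          linear_combination hp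
        · rw [hD]; field_simp
        · field_simp
          linear_combination -hp
      · apply hmem _ _ _ ((t₂ * (1 - t₁) + t₁ * t₂) / D)
        rw [hA₁]
        match_scalars
        · field_simp
          ring
        · field_simp; rw [hD]
          ring
        · field_simp
          ring
      · apply hmem _ _ _ ((t₂ * (1 - t₁) + (1 - t₂) * (1 - t₁)) / D)
        rw [hA₂]
        match_scalars
        · rw [hD]; field_simp
          ring
        · rw [hD]; field_simp
          ring
        · field_simp; rw [hD]
          ring
  · rintro ⟨P, h1, h2, h3⟩
    obtain ⟨r₁, hr₁⟩ := hmem' _ _ _ h1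
    obtain ⟨r₂, hr₂⟩ := hmem' _ _ _ h2
    obtain ⟨r₃, hr₃⟩ := hmem' _ _ _ h3
    rw [hA₃] at hr₁; rw [hA₁] at hr₂; rw [hA₂] at hr₃
    have e12 : (1 - r₁) • B₁ + (r₁ * t₃) • B₂ + (r₁ * (1 - t₃)) • B₃ =
        (r₂ * (1 - t₁)) • B₁ + (1 - r₂) • B₂ + (r₂ * t₁) • B₃ := by
      linear_combination (norm := module) hr₂ - hr₁
    have e23 : (r₂ * (1 - t₁)) • B₁ + (1 - r₂) • B₂ + (r₂ * t₁) • B₃ =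
        (r₃ * t₂) • B₁ + (r₃ * (1 - t₂)) • B₂ + (1 - r₃) • B₃ := by
      linear_combination (norm := module) hr₃ - hr₂
    obtain ⟨e1, e2, e3⟩ := key _ _ _ _ _ _ (by ring) e12
    obtain ⟨e4, e5, e6⟩ := key _ _ _ _ _ _ (by ring) e23
    -- barycentric coordinates of P
    have hr₂0 : r₂ ≠ 0 := by
      intro h
      rw [h] at e1 e3
      -- 1 - r₁ = 0, r₁ (1 - t₃) = 0
      apply ht₃1
      have : r₁ = 1 := by linarith
      rw [this] at e3; linarith
    have hy : (1 - r₂) ≠ 0 := by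
      intro h
      have hx : r₂ * (1 - t₁) ≠ 0 := mul_ne_zero hr₂0 (sub_ne_zero.mpr (Ne.symm ht₁1))
      -- from e4, e5 : y t₂ = x (1 - t₂)
      have : (1 - r₂) * t₂ = r₂ * (1 - t₁) * (1 - t₂) := by
        rw [e4, e5]; ring
      rw [h, zero_mul] at this
      rcases mul_eq_zero.mp this.symm with h' | h'
      · exact hx h'
      · exact (sub_ne_zero.mpr (Ne.symm ht₂1)) h'
    have hx : r₂ * (1 - t₁) ≠ 0 := mul_ne_zero hr₂0 (sub_ne_zero.mpr (Ne.symm ht₁1))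
    have hz : r₂ * t₁ ≠ 0 := mul_ne_zero hr₂0 ht₁0
    -- the three Ceva relations
    have c1 : (r₂ * (1 - t₁)) * t₁ = (r₂ * t₁) * (1 - t₁) := by ring
    have c2 : (1 - r₂) * t₂ = (r₂ * (1 - t₁)) * (1 - t₂) := by
      rw [e4, e5]; ring
    have c3 : (r₂ * t₁) * t₃ = (1 - r₂) * (1 - t₃) := by
      rw [← e2, ← e3]; ring
    have hprod : (1 - t₁) * (1 - t₂) * (1 - t₃) = t₁ * t₂ * t₃ := by
      have := mul_ne_zero (mul_ne_zero hx hy) hz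
      have h' : (r₂ * (1 - t₁)) * (1 - r₂) * (r₂ * t₁) * (t₁ * t₂ * t₃) =
          (r₂ * (1 - t₁)) * (1 - r₂) * (r₂ * t₁) * ((1 - t₁) * (1 - t₂) * (1 - t₃)) := by
        linear_combination ((1 - r₂) * t₂ * (r₂ * t₁) * t₃) * c1 +
          ((r₂ * t₁) * (1 - t₁) * (r₂ * t₁) * t₃) * c2 +
          ((r₂ * t₁) * (1 - t₁) * (r₂ * (1 - t₁)) * (1 - t₂)) * c3
      exact (mul_left_cancel₀ this h'.symm)
    field_simp
    linear_combination hprod
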